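/- (Canonical choice of generators.) For every n ≥ 3, the Σ_n-submodule of M_n generated by the single element l̂_n := 6·(n−1,n) − Σ_{(a,b)} (a,b), where the sum runs over all six ordered pairs (a,b) of distinct elements of {n−2,n−1,n}, equals the augmentation kernel Kr(n) = ker ε. -/

import Mathlib

noncomputable section

/- Common setup: `Pn n` is the set of ordered pairs of distinct elements of `Fin n`,
`Mn n` the real vector space of finitely supported real functions on `Pn n`, with the
`Σ_n`-action `π • (i,j) = (π i, π j)`, and `eps` the augmentation sending every basis
vector to `1`; `Kr(n) = ker eps`. -/

/-- Ordered pairs of distinct elements of `{1,…,n}`. -/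
abbrev Pn (n : ℕ) := {p : Fin n × Fin n // p.1 ≠ p.2}

/-- The vector space `M_n` of finitely supported real functions on `Pn n`. -/
abbrev Mn (n : ℕ) := Pn n →₀ ℝ

/-- The basis vector of `Mn n` corresponding to a pair `(i,j)`. -/
def bv {n : ℕ} (p : Pn n) : Mn n := Finsupp.single p 1

/-- The linear action of `π ∈ Σ_n` on `M_n`, `π • (i,j) = (π i, π j)`. -/
def act {n : ℕ} (π : Equiv.Perm (Fin n)) : Mn n →ₗ[ℝ] Mn n :=
  Finsupp.lmapDomain ℝ ℝ fun p => ⟨(π p.1.1, π p.1.2), fun h => p.2 (π.injective h)⟩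

/-- The augmentation `ε : M_n → ℝ` sending every basis vector to `1`. -/
def eps (n : ℕ) : Mn n →ₗ[ℝ] ℝ := Finsupp.lsum ℝ fun _ => LinearMap.id

/-- The element `n` of `{1,…,n}` (1-indexed). -/
def q1 {n : ℕ} (_h : 2 ≤ n) : Fin n := ⟨n - 1, by omega⟩
/-- The element `n-1` of `{1,…,n}` (1-indexed). -/
def q2 {n : ℕ} (_h : 2 ≤ n) : Fin n := ⟨n - 2, by omega⟩
/-- The element `n-2` of `{1,…,n}` (1-indexed). -/
def q3 {n : ℕ} (_h : 3 ≤ n) : Fin n := ⟨n - 3, by omega⟩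
/-- The element `n-3` of `{1,…,n}` (1-indexed). -/
def q4 {n : ℕ} (_h : 4 ≤ n) : Fin n := ⟨n - 4, by omega⟩

/-- `t̂_n := (n−1,n) − (n,n−1)`. -/
def tHat {n : ℕ} (h : 2 ≤ n) : Mn n :=
  bv ⟨(q2 h, q1 h), Fin.ne_of_val_ne (show n - 2 ≠ n - 1 by omega)⟩
    - bv ⟨(q1 h, q2 h), Fin.ne_of_val_ne (show n - 1 ≠ n - 2 by omega)⟩

/-- `r̂_n := (n−2,n) − (n−1,n)`. -/
def rHat {n : ℕ} (h : 3 ≤ n) : Mn n :=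
  bv ⟨(q3 h, q1 (by omega)), Fin.ne_of_val_ne (show n - 3 ≠ n - 1 by omega)⟩
    - bv ⟨(q2 (by omega), q1 (by omega)), Fin.ne_of_val_ne (show n - 2 ≠ n - 1 by omega)⟩

/-- `l̂_n := 6·(n−1,n) − Σ_{(a,b)} (a,b)`, the sum over all six ordered pairs of distinct
elements of `{n−2, n−1, n}`. -/
def lHat {n : ℕ} (h : 3 ≤ n) : Mn n :=
  (6 : ℝ) • bv ⟨(q2 (by omega), q1 (by omega)),
      Fin.ne_of_val_ne (show n - 2 ≠ n - 1 by omega)⟩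
    - (bv ⟨(q3 h, q2 (by omega)), Fin.ne_of_val_ne (show n - 3 ≠ n - 2 by omega)⟩
      + bv ⟨(q2 (by omega), q3 h), Fin.ne_of_val_ne (show n - 2 ≠ n - 3 by omega)⟩
      + bv ⟨(q3 h, q1 (by omega)), Fin.ne_of_val_ne (show n - 3 ≠ n - 1 by omega)⟩
      + bv ⟨(q1 (by omega), q3 h), Fin.ne_of_val_ne (show n - 1 ≠ n - 3 by omega)⟩
      + bv ⟨(q2 (by omega), q1 (by omega)), Fin.ne_of_val_ne (show n - 2 ≠ n - 1 by omega)⟩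
      + bv ⟨(q1 (by omega), q2 (by omega)), Fin.ne_of_val_ne (show n - 1 ≠ n - 2 by omega)⟩)

namespace Aux5

variable {n : ℕ}

lemma act_bv (π : Equiv.Perm (Fin n)) (p : Pn n) :
    act π (bv p) = bv ⟨(π p.1.1, π p.1.2), fun h => p.2 (π.injective h)⟩ := by
  simp [act, bv, Finsupp.lmapDomain]

lemma eps_bv (p : Pn n) : eps n (bv p) = 1 := by simp [eps, bv]

lemma eps_act (π : Equiv.Perm (Fin n)) (v : Mn n) : eps n (act π v) = eps n v := by
  have : (eps n).comp (act π) = eps n := by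
    refine Finsupp.lhom_ext fun p r => ?_
    simp [eps, act, Finsupp.lmapDomain]
  exact DFunLike.congr_fun this v

lemma act_act (π σ : Equiv.Perm (Fin n)) (v : Mn n) :
    act π (act σ v) = act (π * σ) v := by
  simp only [act, Finsupp.lmapDomain_apply, ← Finsupp.mapDomain_comp]
  congr 1

lemma act_one (v : Mn n) : act (1 : Equiv.Perm (Fin n)) v = v := by
  simp only [act, Finsupp.lmapDomain_apply]
  convert Finsupp.mapDomain_id <;> rfl
end Aux5

namespace Aux5
lemma exists_perm_pair {α : Type*} [DecidableEq α] {a b i j : α}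
    (hab : a ≠ b) (hij : i ≠ j) : ∃ π : Equiv.Perm α, π a = i ∧ π b = j := by
  refine ⟨Equiv.swap (Equiv.swap a i b) j * Equiv.swap a i, ?_, ?_⟩
  · simp only [Equiv.Perm.mul_apply, Equiv.swap_apply_left]
    refine Equiv.swap_apply_of_ne_of_ne ?_ hij
    intro h
    exact hab ((Equiv.swap a i).injective (by rw [← h, Equiv.swap_apply_left]))
  · simp only [Equiv.Perm.mul_apply, Equiv.swap_apply_left]

lemma exists_perm_triple {α : Type*} [DecidableEq α] {a b c i j k : α}
    (hab : a ≠ b) (hac : a ≠ c) (hbc : b ≠ c)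
    (hij : i ≠ j) (hik : i ≠ k) (hjk : j ≠ k) :
    ∃ π : Equiv.Perm α, π a = i ∧ π b = j ∧ π c = k := by
  obtain ⟨σ, hσa, hσb⟩ := exists_perm_pair hab hij
  have h1 : σ c ≠ i := fun h => hac (σ.injective (h.trans hσa.symm)).symm
  have h2 : σ c ≠ j := fun h => hbc (σ.injective (h.trans hσb.symm)).symm
  refine ⟨Equiv.swap (σ c) k * σ, ?_, ?_, ?_⟩
  · simp only [Equiv.Perm.mul_apply, hσa]
    exact Equiv.swap_apply_of_ne_of_ne (Ne.symm h1) hik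
  · simp only [Equiv.Perm.mul_apply, hσb]
    exact Equiv.swap_apply_of_ne_of_ne (Ne.symm h2) hjk
  · simp only [Equiv.Perm.mul_apply, Equiv.swap_apply_left]
end Aux5

namespace Aux5

/-- total version of `bv`: zero on the diagonal. -/
def pbv {n : ℕ} (x y : Fin n) : Mn n :=
  if hxy : x ≠ y then bv ⟨(x, y), hxy⟩ else 0

lemma pbv_eq {n : ℕ} {x y : Fin n} (h : x ≠ y) : pbv x y = bv ⟨(x, y), h⟩ :=
  dif_pos h

lemma act_pbv {n : ℕ} (π : Equiv.Perm (Fin n)) (x y : Fin n) :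
    act π (pbv x y) = pbv (π x) (π y) := by
  by_cases hxy : x = y
  · subst hxy; simp [pbv]
  · rw [pbv_eq hxy, act_bv, pbv_eq (fun hh => hxy (π.injective hh))]

end Aux5


open Aux5

/-- canonical choice of generators: for every `n ≥ 3` the `Σ_n`-submodule of
`M_n` generated by the single element `l̂_n` equals `Kr(n) = ker ε`. -/
theorem statement5 :
    ∀ n : ℕ, ∀ h : 3 ≤ n,
      Submodule.span ℝ
          {x : Mn n | ∃ π : Equiv.Perm (Fin n), x = act π (lHat h)}
        = LinearMap.ker (eps n) := by
  intro n h
  set S : Set (Mn n) := {x | ∃ π : Equiv.Perm (Fin n), x = act π (lHat h)} with hS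
  set W : Submodule ℝ (Mn n) := Submodule.span ℝ S with hW
  have h2 : 2 ≤ n := by omega
  -- the three distinguished elements
  set a : Fin n := ⟨n - 1, by omega⟩ with ha
  set b : Fin n := ⟨n - 2, by omega⟩ with hb
  set c : Fin n := ⟨n - 3, by omega⟩ with hc
  have hba : b ≠ a := Fin.ne_of_val_ne (show n - 2 ≠ n - 1 by omega)
  have hca : c ≠ a := Fin.ne_of_val_ne (show n - 3 ≠ n - 1 by omega)
  have hcb : c ≠ b := Fin.ne_of_val_ne (show n - 3 ≠ n - 2 by omega)
  have hlHat : lHat h = (6 : ℝ) • pbv b a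
      - (pbv c b + pbv b c + pbv c a + pbv a c + pbv b a + pbv a b) := by
    rw [pbv_eq hba, pbv_eq hcb, pbv_eq hcb.symm, pbv_eq hca,
      pbv_eq hca.symm, pbv_eq hba.symm]
    rfl
  -- every generator lies in W, and W is stable under the action
  have hgen : ∀ π : Equiv.Perm (Fin n), act π (lHat h) ∈ W :=
    fun π => Submodule.subset_span ⟨π, rfl⟩
  have hWinv : ∀ (π : Equiv.Perm (Fin n)) (v : Mn n), v ∈ W → act π v ∈ W := by
    intro π v hv
    refine Submodule.span_induction ?_ ?_ ?_ ?_ hv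
    · rintro x ⟨σ, rfl⟩
      rw [act_act]
      exact hgen _
    · simp only [map_zero]; exact Submodule.zero_mem _
    · intro x y _ _ hx hy; rw [map_add]; exact Submodule.add_mem _ hx hy
    · intro r x _ hx; rw [map_smul]; exact Submodule.smul_mem _ _ hx
  -- the two basic differences
  have hact : ∀ π : Equiv.Perm (Fin n), act π (lHat h) =
      (6 : ℝ) • pbv (π b) (π a)
        - (pbv (π c) (π b) + pbv (π b) (π c) + pbv (π c) (π a) + pbv (π a) (π c)
          + pbv (π b) (π a) + pbv (π a) (π b)) := by
    intro π
    rw [hlHat]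
    simp only [map_sub, map_add, map_smul, act_pbv]
  have hLmem : lHat h ∈ W := by
    have := hgen 1; rwa [act_one] at this
  have hd1 : pbv b a - pbv a b ∈ W := by
    have hm : lHat h - act (Equiv.swap a b) (lHat h) ∈ W :=
      Submodule.sub_mem _ hLmem (hgen _)
    have s1 : Equiv.swap a b a = b := Equiv.swap_apply_left a b
    have s2 : Equiv.swap a b b = a := Equiv.swap_apply_right a b
    have s3 : Equiv.swap a b c = c := Equiv.swap_apply_of_ne_of_ne hca hcb
    rw [hact, s1, s2, s3, hlHat] at hm
    have heq : (6 : ℝ) • pbv b a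
        - (pbv c b + pbv b c + pbv c a + pbv a c + pbv b a + pbv a b)
        - ((6 : ℝ) • pbv a b
          - (pbv c a + pbv a c + pbv c b + pbv b c + pbv a b + pbv b a))
        = (6 : ℝ) • (pbv b a - pbv a b) := by module
    rw [heq] at hm
    have := Submodule.smul_mem W (6 : ℝ)⁻¹ hm
    rwa [smul_smul, inv_mul_cancel₀ (by norm_num : (6:ℝ) ≠ 0), one_smul] at this
  have hd2 : pbv b a - pbv c a ∈ W := by
    have hm : lHat h - act (Equiv.swap b c) (lHat h) ∈ W :=
      Submodule.sub_mem _ hLmem (hgen _)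
    have s1 : Equiv.swap b c a = a := Equiv.swap_apply_of_ne_of_ne hba.symm hca.symm
    have s2 : Equiv.swap b c b = c := Equiv.swap_apply_left b c
    have s3 : Equiv.swap b c c = b := Equiv.swap_apply_right b c
    rw [hact, s1, s2, s3, hlHat] at hm
    have heq : (6 : ℝ) • pbv b a
        - (pbv c b + pbv b c + pbv c a + pbv a c + pbv b a + pbv a b)
        - ((6 : ℝ) • pbv c a
          - (pbv b c + pbv c b + pbv b a + pbv a b + pbv c a + pbv a c))
        = (6 : ℝ) • (pbv b a - pbv c a) := by module
    rw [heq] at hm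
    have := Submodule.smul_mem W (6 : ℝ)⁻¹ hm
    rwa [smul_smul, inv_mul_cancel₀ (by norm_num : (6:ℝ) ≠ 0), one_smul] at this
  -- transposition differences
  have hT : ∀ i j : Fin n, i ≠ j → pbv i j - pbv j i ∈ W := by
    intro i j hij
    obtain ⟨π, hπb, hπa⟩ := exists_perm_pair hba hij
    have := hWinv π _ hd1
    rwa [map_sub, act_pbv, act_pbv, hπa, hπb] at this
  -- same-second-coordinate differences
  have hR : ∀ i k j : Fin n, i ≠ k → i ≠ j → k ≠ j → pbv i j - pbv k j ∈ W := by
    intro i k j hik hij hkj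
    obtain ⟨π, hπb, hπc, hπa⟩ := exists_perm_triple hcb.symm hba hca hik hij hkj
    have := hWinv π _ hd2
    rwa [map_sub, act_pbv, act_pbv, hπa, hπb, hπc] at this
  -- same-first-coordinate differences
  have hF : ∀ i j l : Fin n, i ≠ j → i ≠ l → pbv i j - pbv i l ∈ W := by
    intro i j l hij hil
    by_cases hjl : j = l
    · subst hjl; simp only [sub_self]; exact Submodule.zero_mem _
    · have hm := Submodule.add_mem _
        (Submodule.add_mem _ (hT i j hij) (hR j l i hjl hij.symm hil.symm))
        (hT l i hil.symm)
      have heq : pbv i j - pbv j i + (pbv j i - pbv l i) + (pbv l i - pbv i l)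
          = pbv i j - pbv i l := by abel
      rwa [heq] at hm
  -- arbitrary differences
  have hdiff : ∀ i j k l : Fin n, i ≠ j → k ≠ l → pbv i j - pbv k l ∈ W := by
    intro i j k l hij hkl
    by_cases h1 : i = k
    · subst h1; exact hF i j l hij hkl
    · by_cases h2 : j = l
      · subst h2; exact hR i k j h1 hij hkl
      · by_cases h3 : i = l
        · subst h3
          by_cases h4 : j = k
          · subst h4; exact hT i j hij
          · have hm := Submodule.add_mem _ (hT i j hij) (hR j k i h4 hij.symm (Ne.symm h1))
            have heq : pbv i j - pbv j i + (pbv j i - pbv k i) = pbv i j - pbv k i := by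
              abel
            rwa [heq] at hm
        · have hm := Submodule.add_mem _ (hF i j l hij h3) (hR i k l h1 h3 hkl)
          have heq : pbv i j - pbv i l + (pbv i l - pbv k l) = pbv i j - pbv k l := by
            abel
          rwa [heq] at hm
  have hdiff' : ∀ p q : Pn n, bv p - bv q ∈ W := by
    rintro ⟨⟨i, j⟩, hij⟩ ⟨⟨k, l⟩, hkl⟩
    have := hdiff i j k l hij hkl
    rwa [pbv_eq hij, pbv_eq hkl] at this
  -- conclude
  refine le_antisymm ?_ ?_
  · rw [Submodule.span_le]
    rintro x ⟨π, rfl⟩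
    simp only [SetLike.mem_coe, LinearMap.mem_ker, eps_act]
    rw [hlHat]
    simp only [map_sub, map_add, map_smul]
    rw [pbv_eq hba, pbv_eq hcb, pbv_eq hcb.symm, pbv_eq hca, pbv_eq hca.symm,
      pbv_eq hba.symm]
    simp only [eps_bv]
    norm_num
  · intro x hx
    rw [LinearMap.mem_ker] at hx
    have hsum : ∑ p ∈ x.support, x p = 0 := by
      have : eps n x = ∑ p ∈ x.support, x p := by
        simp [eps, Finsupp.sum]
      rwa [this] at hx
    have p0 : Pn n := ⟨(b, a), hba⟩
    have hxeq : x = ∑ p ∈ x.support, x p • (bv p - bv p0) := by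
      have e1 : ∑ p ∈ x.support, x p • (bv p - bv p0)
          = (∑ p ∈ x.support, x p • bv p) - (∑ p ∈ x.support, x p) • bv p0 := by
        rw [Finset.sum_smul]
        rw [← Finset.sum_sub_distrib]
        refine Finset.sum_congr rfl fun p _ => ?_
        rw [smul_sub]
      rw [e1, hsum, zero_smul, sub_zero]
      conv_lhs => rw [← Finsupp.sum_single x]
      rw [Finsupp.sum]
      refine Finset.sum_congr rfl fun p _ => ?_
      rw [bv, Finsupp.smul_single, smul_eq_mul, mul_one]
    rw [hxeq]
    exact Submodule.sum_mem _ fun p _ => Submodule.smul_mem _ _ (hdiff' p p0)
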